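/- If X, Y, Z, W are random variables on a finite probability space with H(Z|X)=0 and H(Z|Y)=0, then the conditional mutual information satisfies I(X;Y|W) ≥ H(Z|W). -/

import Mathlib

open Finset

/-- Probability mass of the event `X = a` under weights `p`. -/
noncomputable def pmass {Ω α : Type} [Fintype Ω] [DecidableEq α]
    (p : Ω → ℝ) (X : Ω → α) (a : α) : ℝ :=
  ∑ ω, if X ω = a then p ω else 0

/-- Shannon entropy (base 2) of a random variable `X` on a finite space. -/
noncomputable def ent {Ω α : Type} [Fintype Ω] [Fintype α] [DecidableEq α]
    (p : Ω → ℝ) (X : Ω → α) : ℝ :=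
  ∑ a, -(pmass p X a * Real.logb 2 (pmass p X a))

/-- Conditional Shannon entropy `H(X|Y) = H(X,Y) - H(Y)`. -/
noncomputable def condEnt {Ω α β : Type} [Fintype Ω] [Fintype α] [Fintype β]
    [DecidableEq α] [DecidableEq β] (p : Ω → ℝ) (X : Ω → α) (Y : Ω → β) : ℝ :=
  ent p (fun ω => (X ω, Y ω)) - ent p Y

/-- Conditional mutual information `I(X;Y|W) = H(X|W) + H(Y|W) - H(X,Y|W)`. -/
noncomputable def condMI {Ω α β γ : Type} [Fintype Ω] [Fintype α] [Fintype β] [Fintype γ]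
    [DecidableEq α] [DecidableEq β] [DecidableEq γ]
    (p : Ω → ℝ) (X : Ω → α) (Y : Ω → β) (W : Ω → γ) : ℝ :=
  condEnt p X W + condEnt p Y W - condEnt p (fun ω => (X ω, Y ω)) W

set_option linter.unusedSectionVars false

noncomputable def phi (x : ℝ) : ℝ := -(x * Real.logb 2 x)

lemma key' (x A B Q : ℝ) (hx : 0 ≤ x) (hA : x ≤ A) (hB : x ≤ B) (hQ : 0 < Q) :
    x * Real.logb 2 A + x * Real.logb 2 B - x * Real.logb 2 Q - x * Real.logb 2 x
      ≤ (A * B / Q - x) / Real.log 2 := by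
  have hlog2 : (0:ℝ) < Real.log 2 := Real.log_pos one_lt_two
  rcases eq_or_lt_of_le hx with h0 | hx'
  · rw [← h0]
    simp only [zero_mul, sub_zero, add_zero, zero_sub, neg_zero, sub_zero]
    have : 0 ≤ A * B / Q := by
      have : (0:ℝ) ≤ A := le_trans hx hA
      have : (0:ℝ) ≤ B := le_trans hx hB
      positivity
    positivity
  · have hA' : 0 < A := lt_of_lt_of_le hx' hA
    have hB' : 0 < B := lt_of_lt_of_le hx' hB
    have hr : 0 < A * B / Q := by positivity
    have e : x * Real.logb 2 A + x * Real.logb 2 B - x * Real.logb 2 Q - x * Real.logb 2 x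
        = x * Real.log ((A * B / Q) / x) / Real.log 2 := by
      rw [Real.log_div (ne_of_gt hr) (ne_of_gt hx'), Real.log_div (by positivity) (ne_of_gt hQ),
        Real.log_mul (ne_of_gt hA') (ne_of_gt hB')]
      simp only [Real.logb]
      ring
    rw [e]
    have h1 : Real.log ((A * B / Q) / x) ≤ (A * B / Q) / x - 1 :=
      Real.log_le_sub_one_of_pos (by positivity)
    have h2 : x * Real.log ((A * B / Q) / x) ≤ A * B / Q - x := by
      have := mul_le_mul_of_nonneg_left h1 hx
      calc x * Real.log ((A * B / Q) / x) ≤ x * ((A * B / Q) / x - 1) := this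
        _ = A * B / Q - x := by field_simp
    gcongr

lemma mi_nonneg {α β : Type} [Fintype α] [Fintype β] (q : α → β → ℝ)
    (hq : ∀ a b, 0 ≤ q a b) :
    phi (∑ a, ∑ b, q a b) + ∑ a, ∑ b, phi (q a b)
      ≤ (∑ a, phi (∑ b, q a b)) + ∑ b, phi (∑ a, q a b) := by
  classical
  have hQ0 : 0 ≤ ∑ a, ∑ b, q a b :=
    Finset.sum_nonneg fun a _ => Finset.sum_nonneg fun b _ => hq a b
  rcases eq_or_lt_of_le hQ0 with hQz | hQpos
  · have hz : ∀ a b, q a b = 0 := by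
      intro a b
      have h1 := (Finset.sum_eq_zero_iff_of_nonneg
        (fun a (_ : a ∈ univ) => Finset.sum_nonneg fun b _ => hq a b)).1 hQz.symm
      have h2 := (Finset.sum_eq_zero_iff_of_nonneg
        (fun b (_ : b ∈ univ) => hq a b)).1 (h1 a (mem_univ a))
      exact h2 b (mem_univ b)
    simp [hz, phi]
  · have hlog2 : (0:ℝ) < Real.log 2 := Real.log_pos one_lt_two
    have hqAB : ∀ a b, q a b ≤ ∑ b', q a b' := fun a b =>
      Finset.single_le_sum (fun b' _ => hq a b') (mem_univ b)
    have hqBB : ∀ a b, q a b ≤ ∑ a', q a' b := fun a b =>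
      Finset.single_le_sum (fun a' _ => hq a' b) (mem_univ a)
    have expandQ : phi (∑ a, ∑ b, q a b)
        = ∑ a, ∑ b, -(q a b * Real.logb 2 (∑ a', ∑ b', q a' b')) := by
      simp only [phi, Finset.sum_mul, ← Finset.sum_neg_distrib]
    have expandA : (∑ a, phi (∑ b, q a b))
        = ∑ a, ∑ b, -(q a b * Real.logb 2 (∑ b', q a b')) := by
      apply Finset.sum_congr rfl
      intro a _
      simp only [phi, Finset.sum_mul, ← Finset.sum_neg_distrib]
    have expandB : (∑ b, phi (∑ a, q a b))
        = ∑ a, ∑ b, -(q a b * Real.logb 2 (∑ a', q a' b)) := by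
      rw [Finset.sum_comm]
      apply Finset.sum_congr rfl
      intro b _
      simp only [phi, Finset.sum_mul, ← Finset.sum_neg_distrib]
    have hswap : (∑ b, ∑ a, q a b) = ∑ a, ∑ b, q a b := Finset.sum_comm
    have sum_r : (∑ a, ∑ b, (∑ b', q a b') * (∑ a', q a' b) / (∑ a', ∑ b', q a' b'))
        = ∑ a, ∑ b, q a b := by
      have h1 : ∀ a, (∑ b, (∑ b', q a b') * (∑ a', q a' b) / (∑ a', ∑ b', q a' b'))
          = ∑ b', q a b' := by
        intro a
        have : (∑ b, (∑ b', q a b') * (∑ a', q a' b) / (∑ a', ∑ b', q a' b'))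
            = ((∑ b', q a b') / (∑ a', ∑ b', q a' b')) * ∑ b, ∑ a', q a' b := by
          rw [Finset.mul_sum]
          apply Finset.sum_congr rfl
          intro b _
          ring
        rw [this, hswap]
        field_simp
      simp only [h1]
    have main : 0 ≤ ∑ a, ∑ b,
        ((-(q a b * Real.logb 2 (∑ b', q a b')) + -(q a b * Real.logb 2 (∑ a', q a' b)))
          - (-(q a b * Real.logb 2 (∑ a', ∑ b', q a' b')) + phi (q a b))) := by
      have step : ∀ a b, (q a b - (∑ b', q a b') * (∑ a', q a' b) / (∑ a', ∑ b', q a' b')) / Real.log 2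
          ≤ ((-(q a b * Real.logb 2 (∑ b', q a b')) + -(q a b * Real.logb 2 (∑ a', q a' b)))
          - (-(q a b * Real.logb 2 (∑ a', ∑ b', q a' b')) + phi (q a b))) := by
        intro a b
        have hk := key' (q a b) (∑ b', q a b') (∑ a', q a' b) (∑ a', ∑ b', q a' b')
          (hq a b) (hqAB a b) (hqBB a b) hQpos
        have hneg : (q a b - (∑ b', q a b') * (∑ a', q a' b) / (∑ a', ∑ b', q a' b')) / Real.log 2
            = -(((∑ b', q a b') * (∑ a', q a' b) / (∑ a', ∑ b', q a' b') - q a b) / Real.log 2) := by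
          ring
        rw [hneg]
        simp only [phi]
        linarith
      calc (0:ℝ) = ((∑ a, ∑ b, q a b)
            - ∑ a, ∑ b, (∑ b', q a b') * (∑ a', q a' b) / (∑ a', ∑ b', q a' b')) / Real.log 2 := by
            rw [sum_r]; simp
        _ = ∑ a, ∑ b, (q a b - (∑ b', q a b') * (∑ a', q a' b) / (∑ a', ∑ b', q a' b')) / Real.log 2 := by
            rw [← Finset.sum_sub_distrib, Finset.sum_div]
            apply Finset.sum_congr rfl
            intro a _
            rw [← Finset.sum_sub_distrib, Finset.sum_div]
        _ ≤ _ := Finset.sum_le_sum fun a _ => Finset.sum_le_sum fun b _ => step a b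
    simp only [Finset.sum_sub_distrib, Finset.sum_add_distrib] at main
    rw [expandQ, expandA, expandB]
    linarith


section Helpers
variable {Ω α β γ δ : Type} [Fintype Ω] [Fintype α] [Fintype β] [Fintype γ] [Fintype δ]
  [DecidableEq α] [DecidableEq β] [DecidableEq γ] [DecidableEq δ] (p : Ω → ℝ)

lemma pmass_nonneg (hp0 : ∀ ω, 0 ≤ p ω) (X : Ω → α) (a : α) : 0 ≤ pmass p X a := by
  apply Finset.sum_nonneg; intro ω _; split <;> simp [hp0 ω]

lemma le_pmass (hp0 : ∀ ω, 0 ≤ p ω) (X : Ω → α) (ω : Ω) : p ω ≤ pmass p X (X ω) := by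
  classical
  have := Finset.single_le_sum (f := fun ω' => if X ω' = X ω then p ω' else 0)
    (fun i _ => by split <;> simp [hp0 i]) (mem_univ ω)
  simpa [pmass] using this

lemma pmass_congr {X X' : Ω → α} (h : ∀ ω, p ω ≠ 0 → X ω = X' ω) :
    pmass p X = pmass p X' := by
  funext a
  apply Finset.sum_congr rfl
  intro ω _
  by_cases hp : p ω = 0
  · simp [hp]
  · rw [h ω hp]

lemma ent_congr {X X' : Ω → α} (h : ∀ ω, p ω ≠ 0 → X ω = X' ω) :
    ent p X = ent p X' := by
  unfold ent; rw [pmass_congr p h]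

lemma ent_comp_inj {κ : Type} [Fintype κ] [DecidableEq κ] (J : Ω → α) (g : α → κ)
    (hg : Function.Injective g) : ent p (fun ω => g (J ω)) = ent p J := by
  unfold ent
  rw [← Finset.sum_subset (Finset.subset_univ (Finset.image g univ)) (f := fun k => -(pmass p (fun ω => g (J ω)) k * Real.logb 2 (pmass p (fun ω => g (J ω)) k)))]
  rw [Finset.sum_image (g := g) (s := univ) (by intro a _ b _ h; exact hg h)]
  · apply Finset.sum_congr rfl
    intro a _
    have : pmass p (fun ω => g (J ω)) (g a) = pmass p J a := by
      unfold pmass; apply Finset.sum_congr rfl; intro ω _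
      simp [hg.eq_iff]
    rw [this]
  · intro k _ hk
    have : pmass p (fun ω => g (J ω)) k = 0 := by
      unfold pmass; apply Finset.sum_eq_zero; intro ω _
      have : g (J ω) ≠ k := by
        intro h; exact hk (Finset.mem_image.2 ⟨J ω, mem_univ _, h⟩)
      simp [this]
    simp [this]

lemma ent_eq_sum_phi (X : Ω → α) : ent p X = ∑ a, phi (pmass p X a) := rfl

lemma sum_ite_const {ι : Type} (s : Finset ι) (P : Prop) [Decidable P] (f : ι → ℝ) :
    (∑ x ∈ s, if P then f x else 0) = if P then ∑ x ∈ s, f x else 0 := by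
  split <;> simp

lemma swap3 {A B C : Type} [Fintype A] [Fintype B] [Fintype C] (f : A → B → C → ℝ) :
    (∑ a : A, ∑ b : B, ∑ c : C, f a b c) = ∑ c : C, ∑ a : A, ∑ b : B, f a b c := by
  rw [show (∑ a : A, ∑ b : B, ∑ c : C, f a b c) = ∑ a : A, ∑ c : C, ∑ b : B, f a b c from
    Finset.sum_congr rfl fun a _ => Finset.sum_comm]
  exact Finset.sum_comm

lemma submod (hp0 : ∀ ω, 0 ≤ p ω) (U : Ω → α) (V : Ω → β) (S : Ω → γ) :
    ent p S + ent p (fun ω => ((U ω, V ω), S ω))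
      ≤ ent p (fun ω => (U ω, S ω)) + ent p (fun ω => (V ω, S ω)) := by
  classical
  set J : Ω → γ × α × β := fun ω => (S ω, U ω, V ω) with hJ
  set q : γ → α → β → ℝ := fun c a b => pmass p J (c, a, b) with hq
  have hq0 : ∀ c a b, 0 ≤ q c a b := fun c a b => pmass_nonneg p hp0 J (c, a, b)
  have hS : ∀ c, pmass p S c = ∑ a, ∑ b, q c a b := by
    intro c
    simp only [hq, hJ]
    unfold pmass
    beta_reduce
    rw [swap3 (f := fun a b ω => if (S ω, U ω, V ω) = (c, a, b) then p ω else 0)]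
    apply Finset.sum_congr rfl
    intro ω _
    simp only [Prod.mk.injEq, ite_and]
    by_cases h2 : S ω = c <;> simp [h2, sum_ite_const]
  have hUS : ∀ a c, pmass p (fun ω => (U ω, S ω)) (a, c) = ∑ b, q c a b := by
    intro a c
    simp only [hq, hJ]
    unfold pmass
    beta_reduce
    rw [Finset.sum_comm]
    apply Finset.sum_congr rfl
    intro ω _
    simp only [Prod.mk.injEq, ite_and]
    by_cases h1 : U ω = a <;> by_cases h2 : S ω = c <;> simp [h1, h2, sum_ite_const]
  have hVS : ∀ b c, pmass p (fun ω => (V ω, S ω)) (b, c) = ∑ a, q c a b := by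
    intro b c
    simp only [hq, hJ]
    unfold pmass
    beta_reduce
    rw [Finset.sum_comm]
    apply Finset.sum_congr rfl
    intro ω _
    simp only [Prod.mk.injEq, ite_and]
    by_cases h1 : V ω = b <;> by_cases h2 : S ω = c <;> simp [h1, h2, sum_ite_const]
  have hUVS : ∀ a b c, pmass p (fun ω => ((U ω, V ω), S ω)) ((a, b), c) = q c a b := by
    intro a b c
    simp only [hq, hJ]
    refine Finset.sum_congr rfl fun ω _ => if_congr ?_ rfl rfl
    simp only [Prod.mk.injEq]
    tauto
  have eS : ent p S = ∑ c, phi (∑ a, ∑ b, q c a b) := by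
    rw [ent_eq_sum_phi]
    exact Finset.sum_congr rfl fun c _ => by rw [hS]
  have eUS : ent p (fun ω => (U ω, S ω)) = ∑ c, ∑ a, phi (∑ b, q c a b) := by
    rw [ent_eq_sum_phi, Fintype.sum_prod_type, Finset.sum_comm]
    exact Finset.sum_congr rfl fun c _ => Finset.sum_congr rfl fun a _ => by rw [hUS]
  have eVS : ent p (fun ω => (V ω, S ω)) = ∑ c, ∑ b, phi (∑ a, q c a b) := by
    rw [ent_eq_sum_phi, Fintype.sum_prod_type, Finset.sum_comm]
    exact Finset.sum_congr rfl fun c _ => Finset.sum_congr rfl fun b _ => by rw [hVS]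
  have eUVS : ent p (fun ω => ((U ω, V ω), S ω)) = ∑ c, ∑ a, ∑ b, phi (q c a b) := by
    rw [ent_eq_sum_phi, Fintype.sum_prod_type, Fintype.sum_prod_type]
    rw [show (∑ a, ∑ b, ∑ c, phi (pmass p (fun ω => ((U ω, V ω), S ω)) ((a, b), c)))
        = ∑ a, ∑ b, ∑ c, phi (q c a b) from
      Finset.sum_congr rfl fun a _ => Finset.sum_congr rfl fun b _ =>
        Finset.sum_congr rfl fun c _ => by rw [hUVS]]
    rw [show (∑ a, ∑ b, ∑ c, phi (q c a b)) = ∑ a, ∑ c, ∑ b, phi (q c a b) from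
      Finset.sum_congr rfl fun a _ => Finset.sum_comm]
    exact Finset.sum_comm
  rw [eS, eUS, eVS, eUVS, ← Finset.sum_add_distrib, ← Finset.sum_add_distrib]
  exact Finset.sum_le_sum fun c _ => mi_nonneg (q c) (hq0 c)


lemma marg2 (Z : Ω → γ) (X : Ω → α) (a : α) :
    pmass p X a = ∑ z, pmass p (fun ω => (Z ω, X ω)) (z, a) := by
  unfold pmass
  rw [Finset.sum_comm]
  apply Finset.sum_congr rfl
  intro ω _
  simp only [Prod.mk.injEq, ite_and]
  by_cases h2 : X ω = a <;> simp [h2]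

lemma det_of_ent_eq (hp0 : ∀ ω, 0 ≤ p ω) (Z : Ω → γ) (X : Ω → α)
    (h : ent p (fun ω => (Z ω, X ω)) = ent p X) :
    ∀ ω ω', p ω ≠ 0 → p ω' ≠ 0 → X ω = X ω' → Z ω = Z ω' := by
  classical
  set j : γ → α → ℝ := fun z a => pmass p (fun ω => (Z ω, X ω)) (z, a) with hj
  set m : α → ℝ := fun a => pmass p X a with hm
  have hj0 : ∀ z a, 0 ≤ j z a := fun z a => pmass_nonneg p hp0 _ (z, a)
  have hmarg : ∀ a, m a = ∑ z, j z a := fun a => marg2 p Z X a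
  have hjm : ∀ z a, j z a ≤ m a := by
    intro z a
    rw [hmarg]
    exact Finset.single_le_sum (fun z' _ => hj0 z' a) (mem_univ z)
  have e1 : ent p (fun ω => (Z ω, X ω)) = ∑ z, ∑ a, phi (j z a) := by
    rw [ent_eq_sum_phi, Fintype.sum_prod_type]
  have e2 : ent p X = ∑ z, ∑ a, -(j z a * Real.logb 2 (m a)) := by
    rw [ent_eq_sum_phi]
    rw [show (∑ a, phi (pmass p X a)) = ∑ a, ∑ z, -(j z a * Real.logb 2 (m a)) from
      Finset.sum_congr rfl fun a _ => by
        simp only [phi, ← hm, hmarg a, Finset.sum_mul, ← Finset.sum_neg_distrib]]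
    exact Finset.sum_comm
  have hD : ∑ z, ∑ a, j z a * (Real.logb 2 (m a) - Real.logb 2 (j z a)) = 0 := by
    have : (∑ z, ∑ a, j z a * (Real.logb 2 (m a) - Real.logb 2 (j z a)))
        = ent p (fun ω => (Z ω, X ω)) - ent p X := by
      rw [e1, e2, ← Finset.sum_sub_distrib]
      apply Finset.sum_congr rfl
      intro z _
      rw [← Finset.sum_sub_distrib]
      apply Finset.sum_congr rfl
      intro a _
      simp only [phi]
      ring
    rw [this, h, sub_self]
  have hnn : ∀ z a, 0 ≤ j z a * (Real.logb 2 (m a) - Real.logb 2 (j z a)) := by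
    intro z a
    rcases eq_or_lt_of_le (hj0 z a) with h0 | hpos
    · rw [← h0]; simp
    · have : Real.logb 2 (j z a) ≤ Real.logb 2 (m a) :=
        Real.logb_le_logb_of_le one_lt_two hpos (hjm z a)
      have : 0 ≤ Real.logb 2 (m a) - Real.logb 2 (j z a) := by linarith
      positivity
  have hterm : ∀ z a, j z a * (Real.logb 2 (m a) - Real.logb 2 (j z a)) = 0 := by
    intro z a
    have h1 := (Finset.sum_eq_zero_iff_of_nonneg
      (fun z (_ : z ∈ univ) => Finset.sum_nonneg fun a _ => hnn z a)).1 hD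
    have h2 := (Finset.sum_eq_zero_iff_of_nonneg
      (fun a (_ : a ∈ univ) => hnn z a)).1 (h1 z (mem_univ z))
    exact h2 a (mem_univ a)
  have key : ∀ z a, j z a ≠ 0 → j z a = m a := by
    intro z a hne
    have hpos : 0 < j z a := lt_of_le_of_ne (hj0 z a) (Ne.symm hne)
    by_contra hne2
    have hlt : j z a < m a := lt_of_le_of_ne (hjm z a) hne2
    have : Real.logb 2 (j z a) < Real.logb 2 (m a) :=
      Real.logb_lt_logb one_lt_two hpos hlt
    have := hterm z a
    nlinarith
  intro ω ω' hω hω' hX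
  by_contra hZ
  have hp1 : 0 < p ω := lt_of_le_of_ne (hp0 ω) (Ne.symm hω)
  have hp2 : 0 < p ω' := lt_of_le_of_ne (hp0 ω') (Ne.symm hω')
  have hj1 : p ω ≤ j (Z ω) (X ω) := le_pmass p hp0 (fun ω => (Z ω, X ω)) ω
  have hj2 : p ω' ≤ j (Z ω') (X ω) := by
    rw [hX]
    exact le_pmass p hp0 (fun ω => (Z ω, X ω)) ω'
  have k1 : j (Z ω) (X ω) = m (X ω) := key _ _ (by linarith)
  have k2 : j (Z ω') (X ω) = m (X ω) := key _ _ (by linarith)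
  have hsum : j (Z ω) (X ω) + j (Z ω') (X ω) ≤ m (X ω) := by
    rw [hmarg]
    rw [← Finset.sum_pair hZ (f := fun z => j z (X ω))]
    exact Finset.sum_le_sum_of_subset_of_nonneg (Finset.subset_univ _)
      (fun z _ _ => hj0 z (X ω))
  have : 0 < m (X ω) := by linarith
  linarith




end Helpers


/-- If `H(Z|X) = 0` and `H(Z|Y) = 0` then `I(X;Y|W) ≥ H(Z|W)`. -/
theorem stmt_0 {Ω α β γ δ : Type} [Fintype Ω] [Fintype α] [Fintype β] [Fintype γ] [Fintype δ]
    [DecidableEq α] [DecidableEq β] [DecidableEq γ] [DecidableEq δ]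
    (p : Ω → ℝ) (hp0 : ∀ ω, 0 ≤ p ω) (hp1 : ∑ ω, p ω = 1)
    (X : Ω → α) (Y : Ω → β) (Z : Ω → γ) (W : Ω → δ)
    (hZX : condEnt p Z X = 0) (hZY : condEnt p Z Y = 0) :
    condEnt p Z W ≤ condMI p X Y W := by
  classical
  obtain ⟨ω₀⟩ : Nonempty Ω := by
    rcases isEmpty_or_nonempty Ω with hE | hNE
    · exfalso
      rw [Finset.univ_eq_empty, Finset.sum_empty] at hp1
      exact one_ne_zero hp1.symm
    · exact hNE
  have hdetX : ∀ ω ω', p ω ≠ 0 → p ω' ≠ 0 → X ω = X ω' → Z ω = Z ω' :=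
    det_of_ent_eq p hp0 Z X (by unfold condEnt at hZX; linarith)
  have hdetY : ∀ ω ω', p ω ≠ 0 → p ω' ≠ 0 → Y ω = Y ω' → Z ω = Z ω' :=
    det_of_ent_eq p hp0 Z Y (by unfold condEnt at hZY; linarith)
  obtain ⟨f, hf⟩ : ∃ f : α → γ, ∀ ω, p ω ≠ 0 → Z ω = f (X ω) := by
    refine ⟨fun a => if h : ∃ ω, p ω ≠ 0 ∧ X ω = a then Z h.choose else Z ω₀, ?_⟩
    intro ω hω
    have hex : ∃ ω', p ω' ≠ 0 ∧ X ω' = X ω := ⟨ω, hω, rfl⟩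
    beta_reduce
    rw [dif_pos hex]
    exact (hdetX hex.choose ω hex.choose_spec.1 hω hex.choose_spec.2).symm
  obtain ⟨g, hg⟩ : ∃ g : β → γ, ∀ ω, p ω ≠ 0 → Z ω = g (Y ω) := by
    refine ⟨fun b => if h : ∃ ω, p ω ≠ 0 ∧ Y ω = b then Z h.choose else Z ω₀, ?_⟩
    intro ω hω
    have hex : ∃ ω', p ω' ≠ 0 ∧ Y ω' = Y ω := ⟨ω, hω, rfl⟩
    beta_reduce
    rw [dif_pos hex]
    exact (hdetY hex.choose ω hex.choose_spec.1 hω hex.choose_spec.2).symm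
  have E1 : ent p (fun ω => (X ω, (Z ω, W ω))) = ent p (fun ω => (X ω, W ω)) := by
    have h1 : ent p (fun ω => (X ω, (Z ω, W ω)))
        = ent p (fun ω => (X ω, (f (X ω), W ω))) :=
      ent_congr p (fun ω hω => by rw [hf ω hω])
    have h2 : ent p (fun ω => (X ω, (f (X ω), W ω))) = ent p (fun ω => (X ω, W ω)) := by
      refine ent_comp_inj p (fun ω => (X ω, W ω)) (fun aw => (aw.1, (f aw.1, aw.2))) ?_
      intro x y hxy
      cases x; cases y
      simp only [Prod.mk.injEq] at hxy ⊢
      exact ⟨hxy.1, hxy.2.2⟩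
    exact h1.trans h2
  have E2 : ent p (fun ω => (Y ω, (Z ω, W ω))) = ent p (fun ω => (Y ω, W ω)) := by
    have h1 : ent p (fun ω => (Y ω, (Z ω, W ω)))
        = ent p (fun ω => (Y ω, (g (Y ω), W ω))) :=
      ent_congr p (fun ω hω => by rw [hg ω hω])
    have h2 : ent p (fun ω => (Y ω, (g (Y ω), W ω))) = ent p (fun ω => (Y ω, W ω)) := by
      refine ent_comp_inj p (fun ω => (Y ω, W ω)) (fun aw => (aw.1, (g aw.1, aw.2))) ?_
      intro x y hxy
      cases x; cases y
      simp only [Prod.mk.injEq] at hxy ⊢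
      exact ⟨hxy.1, hxy.2.2⟩
    exact h1.trans h2
  have E3 : ent p (fun ω => ((X ω, Y ω), (Z ω, W ω))) = ent p (fun ω => ((X ω, Y ω), W ω)) := by
    have h1 : ent p (fun ω => ((X ω, Y ω), (Z ω, W ω)))
        = ent p (fun ω => ((X ω, Y ω), (f (X ω), W ω))) :=
      ent_congr p (fun ω hω => by rw [hf ω hω])
    have h2 : ent p (fun ω => ((X ω, Y ω), (f (X ω), W ω)))
        = ent p (fun ω => ((X ω, Y ω), W ω)) := by
      refine ent_comp_inj p (fun ω => ((X ω, Y ω), W ω))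
        (fun aw => (aw.1, (f aw.1.1, aw.2))) ?_
      intro x y hxy
      obtain ⟨⟨x1, x2⟩, x3⟩ := x
      obtain ⟨⟨y1, y2⟩, y3⟩ := y
      simp only [Prod.mk.injEq] at hxy ⊢
      exact ⟨⟨hxy.1.1, hxy.1.2⟩, hxy.2.2⟩
    exact h1.trans h2
  have E4 := submod p hp0 X Y (fun ω => (Z ω, W ω))
  beta_reduce at E4
  unfold condMI condEnt
  linarith [E1, E2, E3, E4]
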